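/- Let f ∈ ℝ[x₁,…,xₙ] have degree at most n and satisfy f(x) ≥ 0 for all x ∈ H_P. Then f admits a degree n + d SONC certificate: there exist finitely many SONCs s_i and polynomials H_i, where each H_i is a finite product of polynomials from the family {g₁,…,gₙ, −g₁,…,−gₙ} ∪ {x_j − a_j, b_j − x_j : j ∈ [n]} ∪ P ∪ {1}, such that f = Σ_i s_i H_i and deg(s_i H_i) ≤ n + d for every i. -/

import Mathlib

open MvPolynomial Finset
open scoped Classical

noncomputable section

/-- A circuit polynomial in `n` variables. -/
def IsCircuitPoly (n : ℕ) (f : MvPolynomial (Fin n) ℝ) : Prop :=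
  ∃ (r : ℕ) (α : Fin (r + 1) → (Fin n →₀ ℕ)) (β : Fin n →₀ ℕ)
    (cf : Fin (r + 1) → ℝ) (c : ℝ) (lam : Fin (r + 1) → ℝ),
    r ≤ n ∧
    (∀ j, 0 < cf j) ∧
    (∀ j i, Even (α j i)) ∧
    AffineIndependent ℝ (fun j (i : Fin n) => ((α j i : ℕ) : ℝ)) ∧
    (∀ j, 0 < lam j) ∧ (∑ j, lam j) = 1 ∧
    (∀ i, ((β i : ℕ) : ℝ) = ∑ j, lam j * ((α j i : ℕ) : ℝ)) ∧
    f = (∑ j, monomial (α j) (cf j)) + monomial β c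

/-- A nonnegative circuit polynomial. -/
def IsNNCircuit (n : ℕ) (f : MvPolynomial (Fin n) ℝ) : Prop :=
  IsCircuitPoly n f ∧ ∀ x : Fin n → ℝ, 0 ≤ eval x f

/-- A sum of nonnegative circuit polynomials (no degree bound). -/
def IsSONC (n : ℕ) (f : MvPolynomial (Fin n) ℝ) : Prop :=
  ∃ (k : ℕ) (μ : Fin k → ℝ) (p : Fin k → MvPolynomial (Fin n) ℝ),
    (∀ i, 0 ≤ μ i) ∧ (∀ i, IsNNCircuit n (p i)) ∧
    f = ∑ i, C (μ i) * p i

/-- A SONC built from nonnegative circuit polynomials of degree at most `D`. -/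
def IsSONCOfDeg (n D : ℕ) (f : MvPolynomial (Fin n) ℝ) : Prop :=
  ∃ (k : ℕ) (μ : Fin k → ℝ) (p : Fin k → MvPolynomial (Fin n) ℝ),
    (∀ i, 0 ≤ μ i) ∧ (∀ i, IsNNCircuit n (p i) ∧ (p i).totalDegree ≤ D) ∧
    f = ∑ i, C (μ i) * p i

/-- The SONC cone `C_{n,D}`. -/
def InSONCCone (n D : ℕ) (f : MvPolynomial (Fin n) ℝ) : Prop :=
  f.totalDegree ≤ D ∧ IsSONCOfDeg n D f

/-- The quadratic hypercube constraint `g_j(x) = (x_j − a_j)(x_j − b_j)`. -/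
def gpoly {n : ℕ} (a b : Fin n → ℝ) (j : Fin n) : MvPolynomial (Fin n) ℝ :=
  (X j - C (a j)) * (X j - C (b j))

/-- The Kronecker delta polynomial `δ_v` of a vertex `v` of the hypercube
`∏_j {a_j, b_j}`. -/
def kron {n : ℕ} (a b : Fin n → ℝ) (v : Fin n → ℝ) : MvPolynomial (Fin n) ℝ :=
  ∏ j, if v j = a j then C (1 / (b j - a j)) * (C (b j) - X j)
       else C (1 / (b j - a j)) * (X j - C (a j))

/-- The vertex of the hypercube `∏_j {a_j, b_j}` encoded by `ε : Fin n → Bool`. -/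
def vtx {n : ℕ} (a b : Fin n → ℝ) (ε : Fin n → Bool) : Fin n → ℝ :=
  fun j => if ε j then b j else a j

/-- The family `{g₁,…,gₙ, −g₁,…,−gₙ} ∪ {x_j − a_j, b_j − x_j : j} ∪ P ∪ {1}` of
polynomials from which the products `H^{(q)}` in a SONC certificate are formed. -/
def certFamilyOne {n : ℕ} (a b : Fin n → ℝ) (P : Finset (MvPolynomial (Fin n) ℝ)) :
    Set (MvPolynomial (Fin n) ℝ) :=
  {q | (∃ j, q = gpoly a b j ∨ q = - gpoly a b j ∨
        q = X j - C (a j) ∨ q = C (b j) - X j) ∨ q ∈ P ∨ q = 1}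

namespace SoncAux

variable {n : ℕ}

def uw (A B : ℝ) : ℕ → ℝ × ℝ
  | 0 => (0, 1)
  | (k+1) => ((uw A B k).1 * (A + B) + (uw A B k).2, -(A * B * (uw A B k).1))
def Lp (a b : Fin n → ℝ) (j : Fin n) (k : ℕ) : MvPolynomial (Fin n) ℝ :=
  C (uw (a j) (b j) k).1 * X j + C (uw (a j) (b j) k).2

lemma Lp_totalDegree_le (a b : Fin n → ℝ) (j : Fin n) (k : ℕ) :
    (Lp a b j k).totalDegree ≤ k := by
  cases k with
  | zero => simp [Lp, uw, totalDegree_C]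
  | succ k =>
      refine le_trans (totalDegree_add _ _) (max_le ?_ ?_)
      · refine le_trans (totalDegree_mul _ _) ?_
        rw [totalDegree_C, totalDegree_X]
        omega
      · rw [totalDegree_C]; omega

lemma pow_eq_gpoly_mul (a b : Fin n → ℝ) (j : Fin n) (k : ℕ) :
    ∃ q : MvPolynomial (Fin n) ℝ,
      (X j : MvPolynomial (Fin n) ℝ) ^ k = gpoly a b j * q + Lp a b j k ∧
      (q = 0 ∨ q.totalDegree + 2 ≤ k) := by
  induction k with
  | zero => exact ⟨0, by simp [Lp, uw], Or.inl rfl⟩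
  | succ k ih =>
      obtain ⟨q, hq, hb⟩ := ih
      refine ⟨X j * q + C (uw (a j) (b j) k).1, ?_, ?_⟩
      · rw [pow_succ, hq]
        show _ = _ * _ + Lp a b j (k+1)
        simp only [Lp, uw, gpoly]
        push_cast [map_add, map_mul, map_neg]
        ring
      · rcases hb with rfl | hb
        · have he : X j * (0 : MvPolynomial (Fin n) ℝ) + C (uw (a j) (b j) k).1
              = C (uw (a j) (b j) k).1 := by ring
          rw [he]
          cases k with
          | zero => left; simp [uw]
          | succ k =>
              right
              rw [totalDegree_C]
              omega
        · right
          have h1 : (X j * q + C (uw (a j) (b j) k).1).totalDegree ≤ q.totalDegree + 1 := by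
            refine le_trans (totalDegree_add _ _) ?_
            refine max_le (le_trans (totalDegree_mul _ _) ?_) ?_
            · simp [totalDegree_X]; omega
            · simp [totalDegree_C]
          omega

lemma prod_pow_eq (a b : Fin n → ℝ) (α : Fin n →₀ ℕ) (s : Finset (Fin n)) :
    ∃ h : Fin n → MvPolynomial (Fin n) ℝ,
      (∏ j ∈ s, (X j : MvPolynomial (Fin n) ℝ) ^ α j)
        = (∏ j ∈ s, Lp a b j (α j)) + ∑ j ∈ s, h j * gpoly a b j ∧
      ∀ j, h j = 0 ∨ (h j).totalDegree + 2 ≤ ∑ j ∈ s, α j := by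
  induction s using Finset.induction with
  | empty => exact ⟨fun _ => 0, by simp, fun j => Or.inl rfl⟩
  | insert i s hi ih =>
      obtain ⟨h, hs, hbd⟩ := ih
      obtain ⟨q, hq, hqb⟩ := pow_eq_gpoly_mul a b i (α i)
      refine ⟨fun j => if j = i then q * ∏ j' ∈ s, (X j' : MvPolynomial (Fin n) ℝ) ^ α j'
        else Lp a b i (α i) * h j, ?_, ?_⟩
      · rw [Finset.prod_insert hi, Finset.prod_insert hi, Finset.sum_insert hi, hq]
        simp only [eq_self_iff_true, if_true]
        have hrw : ∑ j ∈ s, (if j = i then q * ∏ j' ∈ s, (X j' : MvPolynomial (Fin n) ℝ) ^ α j'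
            else Lp a b i (α i) * h j) * gpoly a b j
            = Lp a b i (α i) * ∑ j ∈ s, h j * gpoly a b j := by
          rw [Finset.mul_sum]
          refine Finset.sum_congr rfl fun j hj => ?_
          rw [if_neg (by rintro rfl; exact hi hj)]
          ring
        rw [hrw, hs]
        ring
      · intro j
        by_cases hji : j = i
        · subst hji
          simp only [eq_self_iff_true, if_true]
          rcases hqb with rfl | hqb
          · left; simp
          · right
            rw [Finset.sum_insert hi]
            have : (q * ∏ j' ∈ s, (X j' : MvPolynomial (Fin n) ℝ) ^ α j').totalDegree
                ≤ q.totalDegree + ∑ j' ∈ s, α j' := by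
              refine le_trans (totalDegree_mul _ _) (Nat.add_le_add_left ?_ _)
              refine le_trans (totalDegree_finset_prod _ _) ?_
              refine Finset.sum_le_sum fun j' _ => ?_
              exact (totalDegree_X_pow _ _).le
            omega
        · simp only [if_neg hji]
          rcases hbd j with hz | hb
          · left; rw [hz, mul_zero]
          · right
            rw [Finset.sum_insert hi]
            have : (Lp a b i (α i) * h j).totalDegree ≤ α i + (h j).totalDegree :=
              le_trans (totalDegree_mul _ _)
                (Nat.add_le_add_right (Lp_totalDegree_le a b i (α i)) _)
            omega

def mfac (a b : Fin n → ℝ) (ε : Fin n → Bool) (j : Fin n) : MvPolynomial (Fin n) ℝ :=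
  if ε j then X j - C (a j) else C (b j) - X j

lemma kron_vtx (a b : Fin n → ℝ) (hab : ∀ j, a j < b j) (ε : Fin n → Bool) :
    kron a b (vtx a b ε) = ∏ j, (C (1 / (b j - a j)) * mfac a b ε j) := by
  unfold kron mfac
  refine Finset.prod_congr rfl fun j _ => ?_
  rcases Bool.eq_false_or_eq_true (ε j) with h | h <;> simp [vtx, h, (hab j).ne']

lemma eval_vtx_gpoly (a b : Fin n → ℝ) (ε : Fin n → Bool) (j : Fin n) :
    eval (vtx a b ε) (gpoly a b j) = 0 := by
  rcases Bool.eq_false_or_eq_true (ε j) with h | h <;> simp [gpoly, vtx, h]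

lemma kron_eval (a b : Fin n → ℝ) (hab : ∀ j, a j < b j) (ε ε' : Fin n → Bool) :
    eval (vtx a b ε') (kron a b (vtx a b ε)) = if ε = ε' then 1 else 0 := by
  rw [kron_vtx a b hab, map_prod]
  by_cases h : ε = ε'
  · subst h
    rw [if_pos rfl]
    refine Finset.prod_eq_one fun j _ => ?_
    have hne : b j - a j ≠ 0 := sub_ne_zero.2 (hab j).ne'
    rcases Bool.eq_false_or_eq_true (ε j) with hb | hb <;>
      · simp [mfac, vtx, hb]
        field_simp
  · rw [if_neg h]
    obtain ⟨j, hj⟩ : ∃ j, ε j ≠ ε' j := by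
      by_contra hc
      push_neg at hc
      exact h (funext hc)
    refine Finset.prod_eq_zero (Finset.mem_univ j) ?_
    rcases Bool.eq_false_or_eq_true (ε j) with hb | hb <;>
      rcases Bool.eq_false_or_eq_true (ε' j) with hb' | hb' <;>
        simp_all [mfac, vtx]

lemma sum_bound {ι : Type*} (s : Finset ι) (F : ι → MvPolynomial (Fin n) ℝ) (D : ℕ)
    (h : ∀ i ∈ s, F i = 0 ∨ (F i).totalDegree + 2 ≤ D) :
    (∑ i ∈ s, F i) = 0 ∨ (∑ i ∈ s, F i).totalDegree + 2 ≤ D := by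
  by_cases hz : ∀ i ∈ s, F i = 0
  · left; exact Finset.sum_eq_zero hz
  · right
    push_neg at hz
    obtain ⟨i0, hi0, hFi0⟩ := hz
    have hD : 2 ≤ D := by
      rcases h i0 hi0 with h' | h'
      · exact absurd h' hFi0
      · omega
    have : (∑ i ∈ s, F i).totalDegree ≤ D - 2 := by
      refine totalDegree_finsetSum_le fun i hi => ?_
      rcases h i hi with h' | h'
      · rw [h', totalDegree_zero]; omega
      · omega
    omega

lemma interp (a b : Fin n → ℝ) (hab : ∀ j, a j < b j) (uu ww : Fin n → ℝ) :
    ∏ j, (C (uu j) * X j + C (ww j))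
      = ∑ ε : Fin n → Bool,
          C (∏ j, (uu j * vtx a b ε j + ww j)) * kron a b (vtx a b ε) := by
  set F : Fin n → Bool → MvPolynomial (Fin n) ℝ := fun j e =>
      C (uu j * (if e then b j else a j) + ww j) * (C (1 / (b j - a j)) *
        (if e then X j - C (a j) else C (b j) - X j)) with hF
  have key : ∀ ε : Fin n → Bool,
      C (∏ j, (uu j * vtx a b ε j + ww j)) * kron a b (vtx a b ε)
        = ∏ j, F j (ε j) := by
    intro ε
    rw [kron_vtx a b hab, map_prod, ← Finset.prod_mul_distrib]
    refine Finset.prod_congr rfl fun j _ => ?_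
    simp only [vtx, mfac, hF]
  have swap := Fintype.prod_sum F
  rw [Finset.sum_congr rfl fun ε _ => key ε, ← swap]
  refine Finset.prod_congr rfl fun j _ => ?_
  rw [Fintype.sum_bool]
  simp only [hF, if_true, Bool.false_eq_true, if_false]
  have hne : b j - a j ≠ 0 := sub_ne_zero.2 (hab j).ne'
  have hC : (C (1 / (b j - a j)) : MvPolynomial (Fin n) ℝ) * (C (b j) - C (a j)) = 1 := by
    rw [← map_sub, ← map_mul]
    rw [show (1 / (b j - a j)) * (b j - a j) = 1 by field_simp]
    exact map_one C
  rw [show C (uu j * b j + ww j) = (C (uu j) * C (b j) + C (ww j) : MvPolynomial (Fin n) ℝ) by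
        rw [map_add, map_mul],
      show C (uu j * a j + ww j) = (C (uu j) * C (a j) + C (ww j) : MvPolynomial (Fin n) ℝ) by
        rw [map_add, map_mul]]
  linear_combination (-(C (uu j) * X j + C (ww j))) * hC

lemma monomial_eq_C_mul_prod (α : Fin n →₀ ℕ) (c : ℝ) :
    (monomial α c : MvPolynomial (Fin n) ℝ) = C c * ∏ j, (X j : MvPolynomial (Fin n) ℝ) ^ α j := by
  rw [monomial_eq]
  congr 1
  exact Finsupp.prod_fintype _ _ (fun i => pow_zero _)

lemma prod_Lp_interp (a b : Fin n → ℝ) (hab : ∀ j, a j < b j) (α : Fin n →₀ ℕ) :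
    (∏ j, Lp a b j (α j))
      = ∑ ε : Fin n → Bool,
          C (eval (vtx a b ε) (∏ j, Lp a b j (α j))) * kron a b (vtx a b ε) := by
  have h0 := interp a b hab (fun j => (uw (a j) (b j) (α j)).1)
      (fun j => (uw (a j) (b j) (α j)).2)
  have hL : ∀ j, Lp a b j (α j)
      = C ((uw (a j) (b j) (α j)).1) * X j + C ((uw (a j) (b j) (α j)).2) := fun j => rfl
  calc (∏ j, Lp a b j (α j))
      = ∏ j, (C ((uw (a j) (b j) (α j)).1) * X j + C ((uw (a j) (b j) (α j)).2)) :=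
        Finset.prod_congr rfl fun j _ => hL j
    _ = ∑ ε : Fin n → Bool, C (∏ j, ((uw (a j) (b j) (α j)).1 * vtx a b ε j
          + (uw (a j) (b j) (α j)).2)) * kron a b (vtx a b ε) := h0
    _ = _ := by
        refine Finset.sum_congr rfl fun ε _ => ?_
        have hev : eval (vtx a b ε) (∏ j, Lp a b j (α j))
            = ∏ j, ((uw (a j) (b j) (α j)).1 * vtx a b ε j + (uw (a j) (b j) (α j)).2) := by
          rw [map_prod]
          exact Finset.prod_congr rfl fun j _ => by rw [hL j]; simp
        rw [hev]

lemma main_decomp (a b : Fin n → ℝ) (hab : ∀ j, a j < b j) (G : MvPolynomial (Fin n) ℝ) :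
    ∃ h : Fin n → MvPolynomial (Fin n) ℝ,
      G = (∑ ε : Fin n → Bool, C (eval (vtx a b ε) G) * kron a b (vtx a b ε))
            + ∑ j, h j * gpoly a b j ∧
      ∀ j, h j = 0 ∨ (h j).totalDegree + 2 ≤ G.totalDegree := by
  have hex := fun α : Fin n →₀ ℕ => prod_pow_eq a b α univ
  choose hh hhe hhb using hex
  set M : MvPolynomial (Fin n) ℝ :=
    ∑ α ∈ G.support, C (coeff α G) * ∏ j, Lp a b j (α j) with hM
  refine ⟨fun j => ∑ α ∈ G.support, C (coeff α G) * hh α j, ?_, ?_⟩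
  · have e1 : G = M + ∑ j, (∑ α ∈ G.support, C (coeff α G) * hh α j) * gpoly a b j := by
      conv_lhs => rw [← support_sum_monomial_coeff G]
      have : ∀ α ∈ G.support, (monomial α (coeff α G) : MvPolynomial (Fin n) ℝ)
          = C (coeff α G) * ∏ j, Lp a b j (α j)
            + ∑ j, (C (coeff α G) * hh α j) * gpoly a b j := by
        intro α _
        rw [monomial_eq_C_mul_prod, hhe α, mul_add, Finset.mul_sum]
        congr 1
        exact Finset.sum_congr rfl fun j _ => by ring
      rw [Finset.sum_congr rfl this, Finset.sum_add_distrib]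
      congr 1
      rw [Finset.sum_comm]
      exact Finset.sum_congr rfl fun j _ => (Finset.sum_mul _ _ _).symm
    have e2 : M = ∑ ε : Fin n → Bool, C (eval (vtx a b ε) M) * kron a b (vtx a b ε) := by
      conv_lhs => rw [hM]
      have : ∀ α ∈ G.support, C (coeff α G) * ∏ j, Lp a b j (α j)
          = ∑ ε : Fin n → Bool, (C (coeff α G) *
              (C (eval (vtx a b ε) (∏ j, Lp a b j (α j))) * kron a b (vtx a b ε))) := by
        intro α _
        rw [← Finset.mul_sum, ← prod_Lp_interp a b hab α]
      have expand : ∀ ε, eval (vtx a b ε) M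
          = ∑ α ∈ G.support, coeff α G * eval (vtx a b ε) (∏ j, Lp a b j (α j)) := by
        intro ε
        rw [hM, map_sum]
        exact Finset.sum_congr rfl fun α _ => by rw [eval_mul, eval_C]
      rw [Finset.sum_congr rfl this, Finset.sum_comm]
      refine Finset.sum_congr rfl fun ε _ => ?_
      rw [expand ε, map_sum, Finset.sum_mul]
      exact Finset.sum_congr rfl fun α _ => by rw [map_mul, mul_assoc]
    have e3 : ∀ ε, eval (vtx a b ε) G = eval (vtx a b ε) M := by
      intro ε
      rw [e1]
      simp [eval_vtx_gpoly]
    rw [Finset.sum_congr rfl fun ε _ => by rw [e3 ε], ← e2]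
    exact e1
  · intro j
    refine sum_bound _ _ _ fun α hα => ?_
    rcases hhb α j with hz | hb
    · left; rw [hz, mul_zero]
    · right
      have h1 : (C (coeff α G) * hh α j).totalDegree ≤ (hh α j).totalDegree := by
        refine le_trans (totalDegree_mul _ _) ?_
        simp [totalDegree_C]
      have h2 : ∑ j', α j' ≤ G.totalDegree := by
        have := le_totalDegree hα
        rwa [Finsupp.sum_fintype _ _ (fun _ => rfl)] at this
      omega

lemma nncircuit_monomial (β : Fin n →₀ ℕ) (hβ : ∀ i, Even (β i)) :
    IsNNCircuit n (monomial β 1) := by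
  constructor
  · haveI : Subsingleton (Fin (0+1)) := by rw [Nat.zero_add]; exact Fin.subsingleton_one
    refine ⟨0, fun _ => β, β, fun _ => 1, 0, fun _ => 1, Nat.zero_le n, fun _ => one_pos,
      fun _ i => hβ i, affineIndependent_of_subsingleton ℝ _, fun _ => one_pos, by simp,
      fun i => by simp, ?_⟩
    simp
  · intro x
    rw [eval_monomial]
    refine mul_nonneg one_pos.le ?_
    unfold Finsupp.prod
    exact Finset.prod_nonneg fun i _ => (hβ i).pow_nonneg _

lemma sonc_monomial (β : Fin n →₀ ℕ) (hβ : ∀ i, Even (β i)) (c : ℝ) (hc : 0 ≤ c) :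
    IsSONC n (monomial β c) := by
  refine ⟨1, fun _ => c, fun _ => monomial β 1, fun _ => hc,
    fun _ => nncircuit_monomial β hβ, ?_⟩
  rw [Fin.sum_univ_one, C_mul_monomial, mul_one]

lemma sonc_C (c : ℝ) (hc : 0 ≤ c) : IsSONC n (C c) := by
  have : (C c : MvPolynomial (Fin n) ℝ) = monomial 0 c := by
    rw [C_apply]
  rw [this]
  exact sonc_monomial 0 (fun i => by simp) c hc

def Good (n d : ℕ) (a b : Fin n → ℝ) (P : Finset (MvPolynomial (Fin n) ℝ))
    (t : MvPolynomial (Fin n) ℝ) : Prop :=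
  ∃ (N : ℕ) (s Hp : Fin N → MvPolynomial (Fin n) ℝ),
    (∀ i, IsSONC n (s i)) ∧
    (∀ i, ∃ L : List (MvPolynomial (Fin n) ℝ),
      (∀ q ∈ L, q ∈ certFamilyOne a b P) ∧ Hp i = L.prod) ∧
    (∀ i, (s i * Hp i).totalDegree ≤ n + d) ∧
    t = ∑ i, s i * Hp i

variable {d : ℕ} {a b : Fin n → ℝ} {P : Finset (MvPolynomial (Fin n) ℝ)}

lemma good_zero : Good n d a b P 0 :=
  ⟨0, fun i => i.elim0, fun i => i.elim0, fun i => i.elim0, fun i => i.elim0,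
    fun i => i.elim0, by simp⟩

lemma good_single {s Hp : MvPolynomial (Fin n) ℝ} (hs : IsSONC n s)
    (hH : ∃ L : List (MvPolynomial (Fin n) ℝ),
      (∀ q ∈ L, q ∈ certFamilyOne a b P) ∧ Hp = L.prod)
    (hdeg : (s * Hp).totalDegree ≤ n + d) :
    Good n d a b P (s * Hp) :=
  ⟨1, fun _ => s, fun _ => Hp, fun _ => hs, fun _ => hH, fun _ => hdeg,
    by rw [Fin.sum_univ_one]⟩

lemma good_add {t₁ t₂ : MvPolynomial (Fin n) ℝ} (h₁ : Good n d a b P t₁)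
    (h₂ : Good n d a b P t₂) : Good n d a b P (t₁ + t₂) := by
  obtain ⟨N₁, s₁, H₁, hs₁, hH₁, hd₁, he₁⟩ := h₁
  obtain ⟨N₂, s₂, H₂, hs₂, hH₂, hd₂, he₂⟩ := h₂
  refine ⟨N₁ + N₂, Fin.append s₁ s₂, Fin.append H₁ H₂, ?_, ?_, ?_, ?_⟩
  · intro i
    refine Fin.addCases (fun i => ?_) (fun i => ?_) i <;>
      simp only [Fin.append_left, Fin.append_right]
    exacts [hs₁ i, hs₂ i]
  · intro i
    refine Fin.addCases (fun i => ?_) (fun i => ?_) i <;>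
      simp only [Fin.append_left, Fin.append_right]
    exacts [hH₁ i, hH₂ i]
  · intro i
    refine Fin.addCases (fun i => ?_) (fun i => ?_) i <;>
      simp only [Fin.append_left, Fin.append_right]
    exacts [hd₁ i, hd₂ i]
  · rw [Fin.sum_univ_add]
    simp only [Fin.append_left, Fin.append_right]
    rw [← he₁, ← he₂]

lemma good_sum {ι : Type*} (s : Finset ι) (F : ι → MvPolynomial (Fin n) ℝ)
    (h : ∀ i ∈ s, Good n d a b P (F i)) : Good n d a b P (∑ i ∈ s, F i) := by
  classical
  induction s using Finset.induction with
  | empty => simpa using good_zero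
  | insert i s hi ih =>
      rw [Finset.sum_insert hi]
      exact good_add (h i (Finset.mem_insert_self i s))
        (ih fun j hj => h j (Finset.mem_insert_of_mem hj))

variable {d : ℕ} {a b : Fin n → ℝ} {P : Finset (MvPolynomial (Fin n) ℝ)}

lemma totalDegree_X_sub_C_le (i : Fin n) (r : ℝ) :
    ((X i - C r : MvPolynomial (Fin n) ℝ)).totalDegree ≤ 1 := by
  rw [sub_eq_add_neg]
  refine le_trans (totalDegree_add _ _) (max_le ?_ ?_)
  · exact (totalDegree_X _).le
  · rw [totalDegree_neg, totalDegree_C]; omega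

lemma totalDegree_gpoly_le (j : Fin n) : (gpoly a b j).totalDegree ≤ 2 := by
  refine le_trans (totalDegree_mul _ _) ?_
  have h1 := totalDegree_X_sub_C_le j (a j)
  have h2 := totalDegree_X_sub_C_le j (b j)
  omega

lemma good_monomial_gpoly (α : Fin n →₀ ℕ) (c : ℝ) (j : Fin n)
    (hdeg : (∑ i, α i) + 2 ≤ n + d) :
    Good n d a b P (monomial α c * gpoly a b j) := by
  set S : Finset (Fin n) := univ.filter (fun i => α i % 2 = 1) with hS
  set αe : Fin n →₀ ℕ := α.mapRange (fun k => 2 * (k / 2)) (by norm_num) with hαe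
  have hαe_apply : ∀ i, αe i = 2 * (α i / 2) := fun i => Finsupp.mapRange_apply
  -- sum bookkeeping
  have hcard : (∑ i, αe i) + S.card = ∑ i, α i := by
    have h1 : ∑ i, α i % 2 = S.card := by
      rw [← Finset.sum_filter_add_sum_filter_not univ (fun i => α i % 2 = 1) (fun i => α i % 2)]
      rw [← hS]
      have e1 : ∑ i ∈ S, α i % 2 = ∑ i ∈ S, 1 := by
        refine Finset.sum_congr rfl fun i hi => ?_
        rw [hS] at hi
        exact (Finset.mem_filter.1 hi).2
      have e2 : ∑ i ∈ univ.filter (fun i => ¬ α i % 2 = 1), α i % 2 = 0 := by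
        refine Finset.sum_eq_zero fun i hi => ?_
        have := (Finset.mem_filter.1 hi).2
        omega
      rw [e1, e2, Finset.sum_const, smul_eq_mul, mul_one]
      omega
    have h2 : ∀ i, αe i + α i % 2 = α i := by
      intro i; rw [hαe_apply]; omega
    calc (∑ i, αe i) + S.card = (∑ i, αe i) + ∑ i, α i % 2 := by rw [h1]
      _ = ∑ i, (αe i + α i % 2) := by rw [Finset.sum_add_distrib]
      _ = ∑ i, α i := Finset.sum_congr rfl fun i _ => h2 i
  -- split the monomial
  have hsplit : (∏ i, (X i : MvPolynomial (Fin n) ℝ) ^ α i)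
      = (monomial αe 1) * ∏ i ∈ S, X i := by
    rw [monomial_eq_C_mul_prod, map_one, one_mul]
    have e1 : ∀ i : Fin n, (X i : MvPolynomial (Fin n) ℝ) ^ α i
        = X i ^ αe i * X i ^ (α i % 2) := by
      intro i
      rw [← pow_add, hαe_apply]
      congr 1
      omega
    rw [Finset.prod_congr rfl fun i _ => e1 i, Finset.prod_mul_distrib]
    congr 1
    rw [← Finset.prod_filter_mul_prod_filter_not univ (fun i => α i % 2 = 1)
      (fun i => (X i : MvPolynomial (Fin n) ℝ) ^ (α i % 2)), ← hS]
    have e2 : ∏ i ∈ S, (X i : MvPolynomial (Fin n) ℝ) ^ (α i % 2) = ∏ i ∈ S, X i := by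
      refine Finset.prod_congr rfl fun i hi => ?_
      rw [hS] at hi
      rw [(Finset.mem_filter.1 hi).2, pow_one]
    have e3 : ∏ i ∈ univ.filter (fun i => ¬ α i % 2 = 1),
        (X i : MvPolynomial (Fin n) ℝ) ^ (α i % 2) = 1 := by
      refine Finset.prod_eq_one fun i hi => ?_
      have := (Finset.mem_filter.1 hi).2
      have : α i % 2 = 0 := by omega
      rw [this, pow_zero]
    rw [e2, e3, mul_one]
  have hexp : (∏ i ∈ S, (X i : MvPolynomial (Fin n) ℝ))
      = ∑ T ∈ S.powerset, (∏ i ∈ T, (X i - C (a i))) * C (∏ i ∈ S \ T, a i) := by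
    have : ∀ i ∈ S, (X i : MvPolynomial (Fin n) ℝ) = (X i - C (a i)) + C (a i) := by
      intro i _; ring
    rw [Finset.prod_congr rfl this, Finset.prod_add]
    exact Finset.sum_congr rfl fun T _ => by rw [map_prod]
  have hmain : monomial α c * gpoly a b j
      = ∑ T ∈ S.powerset, (monomial αe (c * ∏ i ∈ S \ T, a i)
          * ((∏ i ∈ T, (X i - C (a i))) * gpoly a b j)) := by
    rw [monomial_eq_C_mul_prod, hsplit, hexp]
    simp only [Finset.mul_sum, Finset.sum_mul]
    refine Finset.sum_congr rfl fun T _ => ?_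
    have hmono : (monomial αe (c * ∏ i ∈ S \ T, a i) : MvPolynomial (Fin n) ℝ)
        = C (c * ∏ i ∈ S \ T, a i) * monomial αe 1 := by rw [C_mul_monomial, mul_one]
    rw [hmono, map_mul]
    ring
  rw [hmain]
  refine good_sum _ _ fun T hT => ?_
  have hTS : T ⊆ S := Finset.mem_powerset.1 hT
  set e : ℝ := c * ∏ i ∈ S \ T, a i with he
  have hαe_even : ∀ i, Even (αe i) := fun i => by rw [hαe_apply]; exact even_two_mul _
  have hdeg' : ∀ (gg : MvPolynomial (Fin n) ℝ), gg.totalDegree ≤ 2 →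
      ∀ (c' : ℝ), (monomial αe c' * ((∏ i ∈ T, (X i - C (a i))) * gg)).totalDegree ≤ n + d := by
    intro gg hgg c'
    refine le_trans (totalDegree_mul _ _) ?_
    have h1 : (monomial αe c' : MvPolynomial (Fin n) ℝ).totalDegree ≤ ∑ i, αe i := by
      refine le_trans (totalDegree_monomial_le _ _) ?_
      rw [Finsupp.sum_fintype _ _ (fun _ => rfl)]
      simp
    have h2 : ((∏ i ∈ T, (X i - C (a i))) * gg).totalDegree ≤ T.card + 2 := by
      refine le_trans (totalDegree_mul _ _) ?_
      have h3 : (∏ i ∈ T, (X i - C (a i) : MvPolynomial (Fin n) ℝ)).totalDegree ≤ T.card := by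
        refine le_trans (totalDegree_finset_prod _ _) ?_
        calc ∑ i ∈ T, (X i - C (a i) : MvPolynomial (Fin n) ℝ).totalDegree
            ≤ ∑ i ∈ T, 1 := Finset.sum_le_sum fun i _ =>
              totalDegree_X_sub_C_le i (a i)
          _ = T.card := by rw [Finset.sum_const, smul_eq_mul, mul_one]
      omega
    have h4 : T.card ≤ S.card := Finset.card_le_card hTS
    omega
  rcases le_or_gt 0 e with hce | hce
  · refine good_single (sonc_monomial αe hαe_even e hce) ?_ ?_
    · refine ⟨(T.toList.map fun i => X i - C (a i)) ++ [gpoly a b j], ?_, ?_⟩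
      · intro q hq
        rcases List.mem_append.1 hq with hq | hq
        · obtain ⟨i, _, rfl⟩ := List.mem_map.1 hq
          exact Or.inl ⟨i, Or.inr (Or.inr (Or.inl rfl))⟩
        · rw [List.mem_singleton.1 hq]
          exact Or.inl ⟨j, Or.inl rfl⟩
      · rw [List.prod_append, List.prod_singleton, Finset.prod_map_toList]
    · exact hdeg' _ (totalDegree_gpoly_le j) e
  · have hneg : monomial αe e * ((∏ i ∈ T, (X i - C (a i))) * gpoly a b j)
        = monomial αe (-e) * ((∏ i ∈ T, (X i - C (a i))) * (- gpoly a b j)) := by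
      have h5 : (monomial αe (-e) : MvPolynomial (Fin n) ℝ) = C (-1) * monomial αe e := by
        rw [C_mul_monomial, neg_one_mul]
      have h6 : (C (-1) : MvPolynomial (Fin n) ℝ) = -1 := by simp
      rw [h5, h6]
      ring
    rw [hneg]
    refine good_single (sonc_monomial αe hαe_even (-e) (by linarith)) ?_ ?_
    · refine ⟨(T.toList.map fun i => X i - C (a i)) ++ [- gpoly a b j], ?_, ?_⟩
      · intro q hq
        rcases List.mem_append.1 hq with hq | hq
        · obtain ⟨i, _, rfl⟩ := List.mem_map.1 hq
          exact Or.inl ⟨i, Or.inr (Or.inr (Or.inl rfl))⟩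
        · rw [List.mem_singleton.1 hq]
          exact Or.inl ⟨j, Or.inr (Or.inl rfl)⟩
      · rw [List.prod_append, List.prod_singleton, Finset.prod_map_toList]
    · have h7 : ((monomial αe) (-e) * ((∏ i ∈ T, (X i - C (a i))) * (- gpoly a b j))).totalDegree
          = ((monomial αe) (-e) * ((∏ i ∈ T, (X i - C (a i))) * gpoly a b j)).totalDegree := by
        rw [show (monomial αe (-e) : MvPolynomial (Fin n) ℝ) *
              ((∏ i ∈ T, (X i - C (a i))) * (- gpoly a b j))
            = -(monomial αe (-e) * ((∏ i ∈ T, (X i - C (a i))) * gpoly a b j)) by ring,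
          totalDegree_neg]
      rw [h7]
      exact hdeg' _ (totalDegree_gpoly_le j) (-e)

lemma good_mul_gpoly (h : MvPolynomial (Fin n) ℝ) (j : Fin n)
    (hb : h = 0 ∨ h.totalDegree + 2 ≤ n + d) :
    Good n d a b P (h * gpoly a b j) := by
  rcases hb with rfl | hb
  · rw [zero_mul]; exact good_zero
  · rw [← support_sum_monomial_coeff h, Finset.sum_mul]
    refine good_sum _ _ fun α hα => ?_
    refine good_monomial_gpoly α _ j ?_
    have h2 : ∑ i, α i ≤ h.totalDegree := by
      have := le_totalDegree hα
      rwa [Finsupp.sum_fintype _ _ (fun _ => rfl)] at this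
    omega

lemma totalDegree_C_sub_X_le (i : Fin n) (r : ℝ) :
    ((C r - X i : MvPolynomial (Fin n) ℝ)).totalDegree ≤ 1 := by
  rw [show (C r - X i : MvPolynomial (Fin n) ℝ) = -(X i - C r) by ring, totalDegree_neg]
  exact totalDegree_X_sub_C_le i r

lemma totalDegree_mfac_le (ε : Fin n → Bool) (j : Fin n) :
    (mfac a b ε j).totalDegree ≤ 1 := by
  unfold mfac
  split
  · exact totalDegree_X_sub_C_le j (a j)
  · exact totalDegree_C_sub_X_le j (b j)

lemma totalDegree_prod_mfac_le (ε : Fin n → Bool) :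
    (∏ j, mfac a b ε j).totalDegree ≤ n := by
  refine le_trans (totalDegree_finset_prod _ _) ?_
  calc ∑ j, (mfac a b ε j).totalDegree ≤ ∑ _j : Fin n, 1 :=
        Finset.sum_le_sum fun j _ => totalDegree_mfac_le ε j
    _ = n := by simp

lemma totalDegree_kron_le (hab : ∀ j, a j < b j) (ε : Fin n → Bool) :
    (kron a b (vtx a b ε)).totalDegree ≤ n := by
  rw [kron_vtx a b hab ε]
  refine le_trans (totalDegree_finset_prod _ _) ?_
  calc ∑ j, (C (1 / (b j - a j)) * mfac a b ε j).totalDegree ≤ ∑ _j : Fin n, 1 := by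
        refine Finset.sum_le_sum fun j _ => ?_
        refine le_trans (totalDegree_mul _ _) ?_
        have := totalDegree_mfac_le (a := a) (b := b) ε j
        rw [totalDegree_C]
        omega
    _ = n := by simp

lemma kron_split (hab : ∀ j, a j < b j) (ε : Fin n → Bool) :
    kron a b (vtx a b ε) = C (∏ j, (1 / (b j - a j))) * ∏ j, mfac a b ε j := by
  rw [kron_vtx a b hab ε, Finset.prod_mul_distrib, map_prod]

lemma prodinv_pos (hab : ∀ j, a j < b j) : 0 < ∏ j, (1 / (b j - a j)) :=
  Finset.prod_pos fun j _ => by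
    have hpos : 0 < b j - a j := sub_pos.2 (hab j)
    positivity

lemma mfac_list (ε : Fin n → Bool) :
    ∃ L : List (MvPolynomial (Fin n) ℝ),
      (∀ q ∈ L, q ∈ certFamilyOne a b P) ∧ (∏ j, mfac a b ε j) = L.prod := by
  refine ⟨univ.toList.map (mfac a b ε), ?_, ?_⟩
  · intro q hq
    obtain ⟨i, _, rfl⟩ := List.mem_map.1 hq
    unfold mfac
    split
    · exact Or.inl ⟨i, Or.inr (Or.inr (Or.inl rfl))⟩
    · exact Or.inl ⟨i, Or.inr (Or.inr (Or.inr rfl))⟩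
  · rw [Finset.prod_map_toList]

lemma good_vertex_nonneg (hab : ∀ j, a j < b j) (ε : Fin n → Bool) (c : ℝ) (hc : 0 ≤ c) :
    Good n d a b P (C c * kron a b (vtx a b ε)) := by
  have hsplit := kron_split hab ε
  have heq : C c * kron a b (vtx a b ε)
      = C (c * ∏ j, (1 / (b j - a j))) * ∏ j, mfac a b ε j := by
    rw [hsplit, map_mul]
    ring
  rw [heq]
  refine good_single (sonc_C _ (mul_nonneg hc (prodinv_pos hab).le)) (mfac_list ε) ?_
  refine le_trans (totalDegree_mul _ _) ?_
  rw [totalDegree_C]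
  have := totalDegree_prod_mfac_le (a := a) (b := b) ε
  omega

lemma good_vertex_constraint (hab : ∀ j, a j < b j) (ε : Fin n → Bool) (c : ℝ) (hc : 0 ≤ c)
    (p : MvPolynomial (Fin n) ℝ) (hpP : p ∈ P) (hpd : p.totalDegree ≤ d) :
    Good n d a b P (C c * (kron a b (vtx a b ε) * p)) := by
  have hsplit := kron_split hab ε
  have heq : C c * (kron a b (vtx a b ε) * p)
      = C (c * ∏ j, (1 / (b j - a j))) * ((∏ j, mfac a b ε j) * p) := by
    rw [hsplit, map_mul]
    ring
  rw [heq]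
  obtain ⟨L, hL, hLp⟩ := mfac_list (a := a) (b := b) (P := P) ε
  refine good_single (sonc_C _ (mul_nonneg hc (prodinv_pos hab).le))
    ⟨L ++ [p], ?_, ?_⟩ ?_
  · intro q hq
    rcases List.mem_append.1 hq with hq | hq
    · exact hL q hq
    · rw [List.mem_singleton.1 hq]
      exact Or.inr (Or.inl hpP)
  · rw [List.prod_append, List.prod_singleton, hLp]
  · refine le_trans (totalDegree_mul _ _) ?_
    rw [totalDegree_C]
    have h1 := totalDegree_prod_mfac_le (a := a) (b := b) ε
    have h2 : ((∏ j, mfac a b ε j) * p).totalDegree ≤ n + d := by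
      refine le_trans (totalDegree_mul _ _) ?_
      omega
    omega

theorem final
    (n d : ℕ) (a b : Fin n → ℝ) (hab : ∀ j, a j < b j)
    (P : Finset (MvPolynomial (Fin n) ℝ)) (hP : ∀ p ∈ P, p.totalDegree ≤ d)
    (f : MvPolynomial (Fin n) ℝ) (hdeg : f.totalDegree ≤ n)
    (hnn : ∀ x : Fin n → ℝ, (∀ j, x j = a j ∨ x j = b j) →
      (∀ q ∈ P, 0 ≤ eval x q) → 0 ≤ eval x f) :
    Good n d a b P f := by
  obtain ⟨h, hfe, hfb⟩ := main_decomp a b hab f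
  rw [hfe]
  refine good_add (good_sum _ _ fun ε _ => ?_) (good_sum _ _ fun j _ => ?_)
  swap
  · refine good_mul_gpoly (h j) j ?_
    rcases hfb j with hz | hbd
    · exact Or.inl hz
    · right; omega
  · set v : Fin n → ℝ := vtx a b ε with hv
    have hvH : ∀ j, v j = a j ∨ v j = b j := by
      intro j
      rw [hv]
      unfold vtx
      rcases Bool.eq_false_or_eq_true (ε j) with hb | hb <;> simp [hb]
    rcases le_or_gt 0 (eval v f) with hfv | hfv
    · exact good_vertex_nonneg hab ε _ hfv
    · have hex : ∃ p ∈ P, eval v p < 0 := by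
        by_contra hc
        push_neg at hc
        exact absurd (hnn v hvH hc) (not_le.2 hfv)
      obtain ⟨p, hpP, hpv⟩ := hex
      have hpne0 : eval v p ≠ 0 := ne_of_lt hpv
      have key : C (eval v f) * kron a b (vtx a b ε)
          = C (eval v f / eval v p) * (kron a b (vtx a b ε) * p)
            + C (eval v f / eval v p) * (kron a b (vtx a b ε) * (C (eval v p) - p)) := by
        have h9 : (C (eval v f / eval v p) : MvPolynomial (Fin n) ℝ) * C (eval v p)
            = C (eval v f) := by
          rw [← map_mul, div_mul_cancel₀ _ hpne0]
        linear_combination (-(kron a b (vtx a b ε))) * h9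
      rw [key]
      refine good_add ?_ ?_
      · refine good_vertex_constraint hab ε _ ?_ p hpP (hP p hpP)
        exact le_of_lt (div_pos_of_neg_of_neg hfv hpv)
      · set Gv : MvPolynomial (Fin n) ℝ :=
          C (eval v f / eval v p) * (kron a b (vtx a b ε) * (C (eval v p) - p)) with hGv
        have hGdeg : Gv.totalDegree ≤ n + d := by
          rw [hGv]
          refine le_trans (totalDegree_mul _ _) ?_
          rw [totalDegree_C]
          have h1 : (kron a b (vtx a b ε) * (C (eval v p) - p)).totalDegree ≤ n + d := by
            refine le_trans (totalDegree_mul _ _) ?_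
            have h2 := totalDegree_kron_le hab ε
            have h3 : ((C (eval v p) - p : MvPolynomial (Fin n) ℝ)).totalDegree ≤ d := by
              rw [sub_eq_add_neg]
              refine le_trans (totalDegree_add _ _) (max_le ?_ ?_)
              · rw [totalDegree_C]; omega
              · rw [totalDegree_neg]; exact hP p hpP
            omega
          omega
        have hGeval : ∀ ε' : Fin n → Bool, eval (vtx a b ε') Gv = 0 := by
          intro ε'
          rw [hGv]
          by_cases hεε : ε = ε'
          · subst hεε
            simp only [map_mul, map_sub, eval_C]
            rw [← hv]
            simp
          · simp only [map_mul]
            rw [kron_eval a b hab ε ε', if_neg hεε]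
            ring
        obtain ⟨hv2, hve, hvb⟩ := main_decomp a b hab Gv
        have : Gv = ∑ j, hv2 j * gpoly a b j := by
          rw [hve]
          have : ∀ ε' : Fin n → Bool, C (eval (vtx a b ε') Gv) * kron a b (vtx a b ε')
              = 0 := by
            intro ε'
            rw [hGeval ε', map_zero, zero_mul]
          rw [Finset.sum_congr rfl fun ε' _ => this ε', Finset.sum_const_zero, zero_add]
        rw [this]
        refine good_sum _ _ fun j _ => ?_
        refine good_mul_gpoly (hv2 j) j ?_
        rcases hvb j with hz | hbd
        · exact Or.inl hz
        · right; omega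

end SoncAux

/-- If `f` has degree at most `n` and `f ≥ 0` on the constrained
hypercube `H_P` (constraints of degree at most `d`), then `f` admits a degree
`n + d` SONC certificate: `f = Σ_i s_i H_i` with each `s_i` a SONC, each `H_i`
a finite product of polynomials from the family, and `deg(s_i H_i) ≤ n + d`. -/
theorem degree_n_plus_d_SONC_certificate
    (n d : ℕ) (a b : Fin n → ℝ) (hab : ∀ j, a j < b j)
    (P : Finset (MvPolynomial (Fin n) ℝ)) (hP : ∀ p ∈ P, p.totalDegree ≤ d)
    (f : MvPolynomial (Fin n) ℝ) (hdeg : f.totalDegree ≤ n)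
    (hnn : ∀ x : Fin n → ℝ, (∀ j, x j = a j ∨ x j = b j) →
      (∀ q ∈ P, 0 ≤ eval x q) → 0 ≤ eval x f) :
    ∃ (N : ℕ) (s Hp : Fin N → MvPolynomial (Fin n) ℝ),
      (∀ i, IsSONC n (s i)) ∧
      (∀ i, ∃ L : List (MvPolynomial (Fin n) ℝ),
        (∀ q ∈ L, q ∈ certFamilyOne a b P) ∧ Hp i = L.prod) ∧
      (∀ i, (s i * Hp i).totalDegree ≤ n + d) ∧
      f = ∑ i, s i * Hp i := by
  obtain ⟨N, s, Hp, h1, h2, h3, h4⟩ := SoncAux.final n d a b hab P hP f hdeg hnn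
  exact ⟨N, s, Hp, h1, h2, h3, h4⟩
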